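/- Let k, s ≥ 1. There exists n₀ = n₀(k,s) such that for all n ≥ n₀, every family F ⊆ C([n],k) with matching number ν(F) ≤ s satisfies co₂(F) ≤ co₂(B(n,k,s)) = s²·C(n-s,k-1) + (n-k+1)²·(C(n,k-1) − C(n-s,k-1)), with equality if and only if F is isomorphic to B(n,k,s). -/

import Mathlib

open Finset
variable {α : Type*} [DecidableEq α]



/-- Generic upper bound on the number of members of a `k`-uniform family containing a fixed set. -/
lemma filt_card_le (V : Finset α) (k : ℕ) (F : Finset (Finset α))
    (hF : ∀ A ∈ F, A ⊆ V ∧ A.card = k) (E : Finset α) :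
    (F.filter fun A => E ⊆ A).card ≤ ((V \ E).card).choose (k - E.card) := by
  have h := Finset.card_le_card_of_injOn (fun A => A \ E)
    (s := F.filter fun A => E ⊆ A) (t := (V \ E).powersetCard (k - E.card)) ?_ ?_
  · simpa using h
  · intro A hA
    simp only [mem_coe, mem_filter] at hA ⊢
    obtain ⟨hAF, hEA⟩ := hA
    obtain ⟨hAV, hAk⟩ := hF A hAF
    rw [mem_powersetCard]
    exact ⟨sdiff_subset_sdiff hAV (Finset.Subset.refl E), by rw [card_sdiff_of_subset hEA, hAk]⟩
  · intro A hA B hB hAB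
    simp only [coe_filter, Set.mem_setOf_eq] at hA hB
    have : E ∪ (A \ E) = E ∪ (B \ E) := by
      simp only at hAB; rw [hAB]
    rwa [union_sdiff_of_subset hA.2, union_sdiff_of_subset hB.2] at this

/-- Double counting: the sum of degrees of all `e`-subsets equals `C(k,e) * |F|`. -/
lemma degsum (V : Finset α) (k e : ℕ) (F : Finset (Finset α))
    (hF : ∀ A ∈ F, A ⊆ V ∧ A.card = k) :
    ∑ E ∈ V.powersetCard e, (F.filter fun A => E ⊆ A).card = k.choose e * F.card := by
  have : ∀ E ∈ V.powersetCard e, (F.filter fun A => E ⊆ A).card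
      = ∑ A ∈ F, if E ⊆ A then 1 else 0 := by
    intro E _; rw [Finset.card_filter]
  rw [Finset.sum_congr rfl this, Finset.sum_comm]
  have : ∀ A ∈ F, (∑ E ∈ V.powersetCard e, if E ⊆ A then 1 else 0) = k.choose e := by
    intro A hA
    rw [Finset.sum_boole]
    have : (V.powersetCard e).filter (fun E => E ⊆ A) = A.powersetCard e := by
      ext E
      simp only [mem_filter, mem_powersetCard]
      constructor
      · rintro ⟨⟨_, hEe⟩, hEA⟩; exact ⟨hEA, hEe⟩
      · rintro ⟨hEA, hEe⟩; exact ⟨⟨hEA.trans (hF A hA).1, hEe⟩, hEA⟩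
    rw [this, card_powersetCard, (hF A hA).2]
    norm_num
  rw [Finset.sum_congr rfl this, Finset.sum_const, smul_eq_mul, mul_comm]

/-- A family with matching number at most `s` has a cover of size at most `s*k`. -/
lemma exists_cover (V : Finset α) (k s : ℕ) (F : Finset (Finset α))
    (hF : ∀ A ∈ F, A ⊆ V ∧ A.card = k) (hk : 1 ≤ k)
    (hm : ∀ M ⊆ F, (∀ A ∈ M, ∀ B ∈ M, A ≠ B → Disjoint A B) → M.card ≤ s) :
    ∃ W : Finset α, W.card ≤ s * k ∧ ∀ A ∈ F, (A ∩ W).Nonempty := by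
  classical
  set P : Finset (Finset (Finset α)) :=
    F.powerset.filter (fun M => ∀ A ∈ M, ∀ B ∈ M, A ≠ B → Disjoint A B) with hP
  have hPne : P.Nonempty := ⟨∅, by simp [hP]⟩
  obtain ⟨M, hMP, hMmax⟩ := P.exists_maximal hPne
  simp only [hP, mem_filter, mem_powerset] at hMP
  obtain ⟨hMF, hMdisj⟩ := hMP
  refine ⟨M.biUnion id, ?_, ?_⟩
  · calc (M.biUnion id).card ≤ ∑ A ∈ M, A.card := card_biUnion_le
    _ ≤ ∑ _A ∈ M, k := Finset.sum_le_sum (fun A hA => le_of_eq (hF A (hMF hA)).2)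
    _ = M.card * k := by rw [Finset.sum_const, smul_eq_mul]
    _ ≤ s * k := Nat.mul_le_mul_right k (hm M hMF hMdisj)
  · intro A hA
    by_cases hAM : A ∈ M
    · obtain ⟨x, hx⟩ := Finset.card_pos.mp (by rw [(hF A hA).2]; omega)
      exact ⟨x, by simp only [mem_inter, mem_biUnion]; exact ⟨hx, A, hAM, hx⟩⟩
    · by_contra hcon
      push_neg at hcon
      have hdisj : ∀ B ∈ M, Disjoint A B := by
        intro B hB
        rw [Finset.disjoint_left]
        intro x hxA hxB
        have hx : x ∈ A ∩ M.biUnion id := mem_inter.mpr ⟨hxA, mem_biUnion.mpr ⟨B, hB, hxB⟩⟩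
        rw [hcon] at hx
        exact notMem_empty x hx
      have hins : insert A M ∈ P := by
        simp only [hP, mem_filter, mem_powerset]
        refine ⟨insert_subset hA hMF, ?_⟩
        intro X hX Y hY hXY
        rcases mem_insert.mp hX with rfl | hX' <;> rcases mem_insert.mp hY with rfl | hY'
        · exact absurd rfl hXY
        · exact hdisj Y hY'
        · exact (hdisj X hX').symm
        · exact hMdisj X hX' Y hY' hXY
      exact (Finset.ssubset_insert hAM).2 (hMmax hins (Finset.ssubset_insert hAM).1)


/-- `k`-subsets of `V` avoiding `S` are exactly `k`-subsets of `V \ S`. -/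
lemma powersetCard_filter_disj (V S : Finset α) (k : ℕ) :
    (V.powersetCard k).filter (fun A => ¬(A ∩ S).Nonempty) = (V \ S).powersetCard k := by
  ext A
  simp only [mem_filter, mem_powersetCard, not_nonempty_iff_eq_empty,
    ← Finset.disjoint_iff_inter_eq_empty, Finset.subset_sdiff]
  tauto

lemma B_card (V S : Finset α) (k : ℕ) (hS : S ⊆ V) :
    ((V.powersetCard k).filter (fun A => (A ∩ S).Nonempty)).card
      = (V.card).choose k - (V.card - S.card).choose k := by
  have h1 := Finset.card_filter_add_card_filter_not
    (s := V.powersetCard k) (p := fun A => (A ∩ S).Nonempty)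
  rw [powersetCard_filter_disj V S k] at h1
  rw [card_powersetCard, card_powersetCard, card_sdiff_of_subset hS] at h1
  omega

/-- Degree of a `(k-1)`-set meeting `S` in the family `B(V,k,S)`. -/
lemma deg_B_meet (V S E : Finset α) (k : ℕ) (hS : S ⊆ V) (hk : 1 ≤ k) (hkV : k ≤ V.card)
    (hE : E ⊆ V) (hEcard : E.card = k - 1) (hmeet : (E ∩ S).Nonempty) :
    (((V.powersetCard k).filter (fun A => (A ∩ S).Nonempty)).filter fun A => E ⊆ A).card
      = V.card - k + 1 := by
  have himg : ((V.powersetCard k).filter (fun A => (A ∩ S).Nonempty)).filter (fun A => E ⊆ A)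
      = (V \ E).image (fun x => insert x E) := by
    ext A
    simp only [mem_filter, mem_powersetCard, mem_image, mem_sdiff]
    constructor
    · rintro ⟨⟨⟨hAV, hAk⟩, _⟩, hEA⟩
      have hcard : (A \ E).card = 1 := by rw [card_sdiff_of_subset hEA, hAk, hEcard]; omega
      obtain ⟨x, hx⟩ := Finset.card_eq_one.mp hcard
      have hxAE : x ∈ A \ E := by rw [hx]; exact mem_singleton_self x
      rw [mem_sdiff] at hxAE
      refine ⟨x, ⟨hAV hxAE.1, hxAE.2⟩, ?_⟩
      have := union_sdiff_of_subset hEA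
      rw [hx] at this
      rw [← this, union_comm, ← insert_eq]
    · rintro ⟨x, ⟨hxV, hxE⟩, rfl⟩
      have hcard : (insert x E).card = k := by rw [card_insert_of_notMem hxE, hEcard]; omega
      refine ⟨⟨⟨insert_subset hxV hE, hcard⟩, ?_⟩, subset_insert x E⟩
      obtain ⟨y, hy⟩ := hmeet
      exact ⟨y, mem_inter.mpr ⟨mem_insert_of_mem (mem_inter.mp hy).1, (mem_inter.mp hy).2⟩⟩
  rw [himg, Finset.card_image_of_injOn, card_sdiff_of_subset hE, hEcard]
  · omega
  · intro x hx y hy hxy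
    simp only [coe_sdiff, Set.mem_diff, mem_coe] at hx hy
    simp only at hxy
    have : x ∈ insert y E := by rw [← hxy]; exact mem_insert_self x E
    rcases mem_insert.mp this with h | h
    · exact h
    · exact absurd h hx.2

/-- Degree of a `(k-1)`-set disjoint from `S` in the family `B(V,k,S)`. -/
lemma deg_B_miss (V S E : Finset α) (k : ℕ) (hS : S ⊆ V) (hk : 1 ≤ k)
    (hE : E ⊆ V) (hEcard : E.card = k - 1) (hmiss : E ∩ S = ∅) :
    (((V.powersetCard k).filter (fun A => (A ∩ S).Nonempty)).filter fun A => E ⊆ A).card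
      = S.card := by
  have hdisj : Disjoint E S := Finset.disjoint_iff_inter_eq_empty.mpr hmiss
  have himg : ((V.powersetCard k).filter (fun A => (A ∩ S).Nonempty)).filter (fun A => E ⊆ A)
      = S.image (fun x => insert x E) := by
    ext A
    simp only [mem_filter, mem_powersetCard, mem_image]
    constructor
    · rintro ⟨⟨⟨hAV, hAk⟩, hmeet⟩, hEA⟩
      have hcard : (A \ E).card = 1 := by rw [card_sdiff_of_subset hEA, hAk, hEcard]; omega
      obtain ⟨x, hx⟩ := Finset.card_eq_one.mp hcard
      obtain ⟨y, hy⟩ := hmeet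
      rw [mem_inter] at hy
      have hyE : y ∉ E := fun h => (Finset.disjoint_left.mp hdisj h) hy.2
      have hyx : y ∈ A \ E := mem_sdiff.mpr ⟨hy.1, hyE⟩
      rw [hx, mem_singleton] at hyx
      refine ⟨y, hy.2, ?_⟩
      have := union_sdiff_of_subset hEA
      rw [hx, ← hyx] at this
      rw [← this, union_comm, ← insert_eq]
    · rintro ⟨x, hxS, rfl⟩
      have hxE : x ∉ E := fun h => (Finset.disjoint_left.mp hdisj h) hxS
      have hcard : (insert x E).card = k := by rw [card_insert_of_notMem hxE, hEcard]; omega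
      exact ⟨⟨⟨insert_subset (hS hxS) hE, hcard⟩,
        ⟨x, mem_inter.mpr ⟨mem_insert_self x E, hxS⟩⟩⟩, subset_insert x E⟩
  rw [himg, Finset.card_image_of_injOn]
  intro x hx y hy hxy
  simp only [mem_coe] at hx hy
  have hxE : x ∉ E := fun h => (Finset.disjoint_left.mp hdisj h) hx
  simp only at hxy
  have : x ∈ insert y E := by rw [← hxy]; exact mem_insert_self x E
  rcases mem_insert.mp this with h | h
  · exact h
  · exact absurd h hxE

/-- The value of `co₂` on the extremal family `B(V,k,S)`. -/
lemma co2_B (V S : Finset α) (k : ℕ) (hS : S ⊆ V) (hk : 1 ≤ k) (hkV : k ≤ V.card) :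
    ∑ E ∈ V.powersetCard (k-1),
        ((((V.powersetCard k).filter (fun A => (A ∩ S).Nonempty)).filter
          fun A => E ⊆ A).card) ^ 2
      = S.card ^ 2 * (V.card - S.card).choose (k-1)
        + (V.card - k + 1) ^ 2 * ((V.card).choose (k-1) - (V.card - S.card).choose (k-1)) := by
  rw [← Finset.sum_filter_add_sum_filter_not (V.powersetCard (k-1))
    (fun E => (E ∩ S).Nonempty)]
  have h1 : ∀ E ∈ (V.powersetCard (k-1)).filter (fun E => (E ∩ S).Nonempty),
      ((((V.powersetCard k).filter (fun A => (A ∩ S).Nonempty)).filter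
        fun A => E ⊆ A).card) ^ 2 = (V.card - k + 1) ^ 2 := by
    intro E hE
    simp only [mem_filter, mem_powersetCard] at hE
    rw [deg_B_meet V S E k hS hk hkV hE.1.1 hE.1.2 hE.2]
  have h2 : ∀ E ∈ (V.powersetCard (k-1)).filter (fun E => ¬(E ∩ S).Nonempty),
      ((((V.powersetCard k).filter (fun A => (A ∩ S).Nonempty)).filter
        fun A => E ⊆ A).card) ^ 2 = S.card ^ 2 := by
    intro E hE
    simp only [mem_filter, mem_powersetCard, not_nonempty_iff_eq_empty] at hE
    rw [deg_B_miss V S E k hS hk hE.1.1 hE.1.2 hE.2]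
  rw [Finset.sum_congr rfl h1, Finset.sum_congr rfl h2, Finset.sum_const, Finset.sum_const,
    smul_eq_mul, smul_eq_mul]
  have hcard2 : ((V.powersetCard (k-1)).filter (fun E => ¬(E ∩ S).Nonempty)).card
      = (V.card - S.card).choose (k-1) := by
    rw [powersetCard_filter_disj, card_powersetCard, card_sdiff_of_subset hS]
  have hcard1 : ((V.powersetCard (k-1)).filter (fun E => (E ∩ S).Nonempty)).card
      = (V.card).choose (k-1) - (V.card - S.card).choose (k-1) := B_card V S (k-1) hS
  rw [hcard1, hcard2, mul_comm]
  ring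


lemma powersetCard_erase (V : Finset α) (v : α) (j : ℕ) :
    (V.powersetCard j).filter (fun E => v ∉ E) = (V.erase v).powersetCard j := by
  ext E
  simp only [mem_filter, mem_powersetCard, Finset.subset_erase]
  tauto

/-- Splitting the degree of a `(k-1)`-set not containing `v`. -/
lemma deg_split (k : ℕ) (F : Finset (Finset α)) (hF : ∀ A ∈ F, A.card = k)
    (v : α) (E : Finset α) (hvE : v ∉ E) (hEcard : E.card = k - 1) (hk : 1 ≤ k) :
    (F.filter fun A => E ⊆ A).card
      = ((F.filter (fun A => v ∉ A)).filter fun A => E ⊆ A).card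
        + (if insert v E ∈ F then 1 else 0) := by
  have hsplit := Finset.card_filter_add_card_filter_not
    (s := F.filter fun A => E ⊆ A) (p := fun A => v ∉ A)
  have h1 : (F.filter fun A => E ⊆ A).filter (fun A => v ∉ A)
      = (F.filter (fun A => v ∉ A)).filter fun A => E ⊆ A := by
    rw [Finset.filter_filter, Finset.filter_filter]
    apply Finset.filter_congr; intro A _; tauto
  have h2 : (F.filter fun A => E ⊆ A).filter (fun A => ¬v ∉ A)
      = if insert v E ∈ F then {insert v E} else ∅ := by
    ext A
    simp only [mem_filter, not_not]
    constructor
    · rintro ⟨⟨hAF, hEA⟩, hvA⟩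
      have hAeq : A = insert v E := by
        have hcard : (A \ E).card = 1 := by
          rw [card_sdiff_of_subset hEA, hF A hAF, hEcard]; omega
        have hsub : {v} ⊆ A \ E := singleton_subset_iff.mpr (mem_sdiff.mpr ⟨hvA, hvE⟩)
        have := Finset.eq_of_subset_of_card_le hsub (by rw [hcard, card_singleton])
        have hu := union_sdiff_of_subset hEA
        rw [← this] at hu
        rw [← hu, union_comm, ← insert_eq]
      rw [hAeq] at hAF ⊢
      simp [hAF]
    · intro hA
      by_cases h : insert v E ∈ F
      · simp only [if_pos h, mem_singleton] at hA
        subst hA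
        exact ⟨⟨h, subset_insert v E⟩, mem_insert_self v E⟩
      · simp [if_neg h] at hA
  rw [h1, h2] at hsplit
  have : (if insert v E ∈ F then ({insert v E} : Finset (Finset α)) else ∅).card
      = if insert v E ∈ F then 1 else 0 := by split <;> simp
  omega

/-- The fundamental decomposition of `co₂` at a vertex `v`. -/
lemma co2_decomp (V : Finset α) (k : ℕ) (hk : 2 ≤ k) (v : α)
    (F : Finset (Finset α)) (hF : ∀ A ∈ F, A.card = k) :
    ∑ E ∈ V.powersetCard (k-1), ((F.filter fun A => E ⊆ A).card) ^ 2
      = (∑ E ∈ (V.powersetCard (k-1)).filter (fun E => v ∈ E),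
          ((F.filter fun A => E ⊆ A).card) ^ 2)
        + (∑ E ∈ (V.erase v).powersetCard (k-1),
            (((F.filter (fun A => v ∉ A)).filter fun A => E ⊆ A).card) ^ 2)
        + 2 * (∑ E ∈ (V.erase v).powersetCard (k-1),
            ((F.filter (fun A => v ∉ A)).filter fun A => E ⊆ A).card
              * (if insert v E ∈ F then 1 else 0))
        + (((V.erase v).powersetCard (k-1)).filter (fun E => insert v E ∈ F)).card := by
  rw [← Finset.sum_filter_add_sum_filter_not (V.powersetCard (k-1)) (fun E => v ∈ E)]
  rw [powersetCard_erase]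
  have hterm : ∀ E ∈ (V.erase v).powersetCard (k-1),
      ((F.filter fun A => E ⊆ A).card) ^ 2
        = (((F.filter (fun A => v ∉ A)).filter fun A => E ⊆ A).card) ^ 2
          + 2 * (((F.filter (fun A => v ∉ A)).filter fun A => E ⊆ A).card
              * (if insert v E ∈ F then 1 else 0))
          + (if insert v E ∈ F then 1 else 0) := by
    intro E hE
    rw [mem_powersetCard, Finset.subset_erase] at hE
    rw [deg_split k F hF v E hE.1.2 hE.2 (by omega)]
    split <;> ring
  rw [Finset.sum_congr rfl hterm]
  rw [Finset.sum_add_distrib, Finset.sum_add_distrib, Finset.mul_sum, Finset.sum_boole]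
  push_cast
  ring


/-- Threshold for "n large enough". -/
def Nbig (k s : ℕ) : ℕ := s^2 * k^3 + k^3 + k + s + 16

lemma Nbig_step (k s : ℕ) : Nbig k s + 1 ≤ Nbig k (s+1) := by
  unfold Nbig
  have h1 : (s+1)^2*k^3 = s^2*k^3 + 2*s*k^3 + k^3 := by ring
  omega

lemma Nbig_ge (k s n : ℕ) (hn : Nbig k s ≤ n) : k + s + 16 ≤ n := by
  unfold Nbig at hn; omega

/-- Arithmetic: `s²k²(k-1) ≤ n-1` and `s²k³ < n-k+1` for `n ≥ Nbig k s`. -/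
lemma Nbig_arith (k s n : ℕ) (hn : Nbig k s ≤ n) :
    s^2*k^2*(k-1) ≤ n - 1 ∧ s^2*k^3 + k < n - k + 1 := by
  unfold Nbig at hn
  have hk3 : k ≤ k^3 := Nat.le_self_pow (by norm_num) k
  have h1 : s^2*k^2*(k-1) ≤ s^2*(k^2*k) := by
    rw [mul_assoc]
    exact Nat.mul_le_mul_left _ (Nat.mul_le_mul_left _ (by omega))
  have h2 : s^2*(k^2*k) = s^2*k^3 := by ring
  omega

lemma pascal (n k : ℕ) (hn : 1 ≤ n) (hk : 1 ≤ k) :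
    n.choose k = (n-1).choose (k-1) + (n-1).choose k := by
  have h1 : n - 1 + 1 = n := by omega
  have h2 : k - 1 + 1 = k := by omega
  calc n.choose k = (n-1+1).choose (k-1+1) := by rw [h1, h2]
  _ = (n-1).choose (k-1) + (n-1).choose (k-1+1) := Nat.choose_succ_succ _ _
  _ = (n-1).choose (k-1) + (n-1).choose k := by rw [h2]

lemma choose_shift (n k : ℕ) (hn : 2 ≤ n) (hk : 2 ≤ k) :
    (n-1) * ((n-2).choose (k-2)) = (k-1) * ((n-1).choose (k-1)) := by
  have h1 : n - 2 + 1 = n - 1 := by omega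
  have h2 : k - 2 + 1 = k - 1 := by omega
  have := Nat.add_one_mul_choose_eq (n-2) (k-2)
  rw [h1, h2] at this
  rw [this, mul_comm]

/-- Key spreading bound: `s²k²·C(n-2,k-2) ≤ C(n-1,k-1)` for `n ≥ Nbig k s`. -/
lemma spread_bound (k s n : ℕ) (hk : 2 ≤ k) (hn : Nbig k s ≤ n) :
    s^2*k^2*((n-2).choose (k-2)) ≤ (n-1).choose (k-1) := by
  have hn' : k + s + 16 ≤ n := Nbig_ge k s n hn
  have harith := (Nbig_arith k s n hn).1
  have hmul := choose_shift n k (by omega) hk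
  have hchain : (k-1) * (s^2*k^2*((n-2).choose (k-2))) ≤ (k-1) * ((n-1).choose (k-1)) := by
    calc (k-1) * (s^2*k^2*((n-2).choose (k-2)))
        = (s^2*k^2*(k-1)) * ((n-2).choose (k-2)) := by ring
    _ ≤ (n-1) * ((n-2).choose (k-2)) := Nat.mul_le_mul_right _ harith
    _ = (k-1) * ((n-1).choose (k-1)) := hmul
  exact Nat.le_of_mul_le_mul_left hchain (by omega)

lemma pair_filter_eq (F : Finset (Finset α)) (v u : α) :
    F.filter (fun A => v ∈ A ∧ u ∈ A) = F.filter (fun A => ({v, u} : Finset α) ⊆ A) := by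
  apply Finset.filter_congr
  intro A _
  simp [insert_subset_iff]

/-- Erdős' matching theorem for large `n` (inequality form). -/
lemma emc_size (k : ℕ) (hk : 2 ≤ k) : ∀ s : ℕ, ∀ V : Finset α, ∀ F : Finset (Finset α),
    Nbig k s ≤ V.card → (∀ A ∈ F, A ⊆ V ∧ A.card = k) →
    (∀ M ⊆ F, (∀ A ∈ M, ∀ B ∈ M, A ≠ B → Disjoint A B) → M.card ≤ s) →
    F.card ≤ (V.card).choose k - (V.card - s).choose k := by
  intro s
  induction s with
  | zero =>
    intro V F _ _ hm
    have hF0 : F = ∅ := by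
      by_contra h
      obtain ⟨A, hA⟩ := Finset.nonempty_iff_ne_empty.mpr h
      have := hm {A} (singleton_subset_iff.mpr hA) (by
        intro X hX Y hY hXY
        rw [mem_singleton] at hX hY
        exact absurd (hX.trans hY.symm) hXY)
      simp at this
    simp [hF0]
  | succ s ih =>
    intro V F hn hF hm
    set n := V.card with hndef
    have hn16 : k + (s+1) + 16 ≤ n := Nbig_ge k (s+1) n hn
    by_cases hbig : ∃ v, (s+1)*k*((n-2).choose (k-2)) < (F.filter (fun A => v ∈ A)).card
    · obtain ⟨v, hv⟩ := hbig
      have hdegpos : 0 < (F.filter (fun A => v ∈ A)).card := lt_of_le_of_lt (Nat.zero_le _) hv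
      obtain ⟨A₁, hA₁⟩ := Finset.card_pos.mp hdegpos
      rw [mem_filter] at hA₁
      have hvV : v ∈ V := (hF A₁ hA₁.1).1 hA₁.2
      -- matching number of F' is at most s
      have hm' : ∀ M ⊆ F.filter (fun A => v ∉ A),
          (∀ A ∈ M, ∀ B ∈ M, A ≠ B → Disjoint A B) → M.card ≤ s := by
        intro M hM hMd
        by_contra hcon
        push_neg at hcon
        obtain ⟨M₀, hM₀M, hM₀card⟩ := Finset.exists_subset_card_eq (Nat.succ_le_of_lt hcon)
        set W := M₀.biUnion id with hWdef
        have hWcard : W.card ≤ (s+1)*k := by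
          calc W.card ≤ ∑ A ∈ M₀, A.card := card_biUnion_le
          _ ≤ ∑ _A ∈ M₀, k := Finset.sum_le_sum (fun A hA =>
              le_of_eq (hF A (Finset.mem_filter.mp (hM (hM₀M hA))).1).2)
          _ = (s+1) * k := by rw [Finset.sum_const, smul_eq_mul, hM₀card]
        have hvW : v ∉ W := by
          rw [hWdef, mem_biUnion]
          rintro ⟨B, hB, hvB⟩
          exact (Finset.mem_filter.mp (hM (hM₀M hB))).2 hvB
        have hWV : W ⊆ V := by
          intro x hx
          rw [hWdef, mem_biUnion] at hx
          obtain ⟨B, hB, hxB⟩ := hx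
          exact (hF B (Finset.mem_filter.mp (hM (hM₀M hB))).1).1 hxB
        -- count members containing v and meeting W
        have hcount : (F.filter (fun A => v ∈ A ∧ (A ∩ W).Nonempty)).card
            ≤ (s+1)*k*((n-2).choose (k-2)) := by
          have hsub : F.filter (fun A => v ∈ A ∧ (A ∩ W).Nonempty)
              ⊆ W.biUnion (fun u => F.filter (fun A => v ∈ A ∧ u ∈ A)) := by
            intro A hA
            rw [mem_filter] at hA
            obtain ⟨x, hx⟩ := hA.2.2
            rw [mem_inter] at hx
            rw [mem_biUnion]
            exact ⟨x, hx.2, mem_filter.mpr ⟨hA.1, hA.2.1, hx.1⟩⟩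
          calc (F.filter (fun A => v ∈ A ∧ (A ∩ W).Nonempty)).card
              ≤ (W.biUnion (fun u => F.filter (fun A => v ∈ A ∧ u ∈ A))).card :=
                Finset.card_le_card hsub
          _ ≤ ∑ u ∈ W, (F.filter (fun A => v ∈ A ∧ u ∈ A)).card := card_biUnion_le
          _ ≤ ∑ _u ∈ W, (n-2).choose (k-2) := by
              apply Finset.sum_le_sum
              intro u hu
              rw [pair_filter_eq]
              have hvu : v ≠ u := fun h => hvW (h ▸ hu)
              have := filt_card_le V k F hF {v, u}
              have hc2 : ({v, u} : Finset α).card = 2 := by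
                rw [card_insert_of_notMem (by simp [hvu]), card_singleton]
              have hVs : (V \ {v, u}).card = n - 2 := by
                have hsub2 : ({v, u} : Finset α) ⊆ V := by
                  intro x hx
                  rcases mem_insert.mp hx with rfl | hx
                  · exact hvV
                  · exact (mem_singleton.mp hx) ▸ hWV hu
                rw [card_sdiff_of_subset hsub2, hc2]
              rwa [hc2, hVs] at this
          _ = W.card * ((n-2).choose (k-2)) := by rw [Finset.sum_const, smul_eq_mul]
          _ ≤ (s+1)*k*((n-2).choose (k-2)) := Nat.mul_le_mul_right _ hWcard
        -- extract a member containing v and disjoint from W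
        have hsplit := Finset.card_filter_add_card_filter_not
          (s := F.filter (fun A => v ∈ A)) (p := fun A => (A ∩ W).Nonempty)
        rw [Finset.filter_filter, Finset.filter_filter] at hsplit
        have hpos : 0 < (F.filter (fun A => v ∈ A ∧ ¬(A ∩ W).Nonempty)).card := by omega
        obtain ⟨A₀, hA₀⟩ := Finset.card_pos.mp hpos
        rw [mem_filter, not_nonempty_iff_eq_empty] at hA₀
        obtain ⟨hA₀F, hvA₀, hA₀W⟩ := hA₀
        have hA₀M₀ : A₀ ∉ M₀ := fun h => (Finset.mem_filter.mp (hM (hM₀M h))).2 hvA₀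
        have hfinal := hm (insert A₀ M₀) (by
          intro X hX
          rcases mem_insert.mp hX with rfl | hX'
          · exact hA₀F
          · exact (Finset.mem_filter.mp (hM (hM₀M hX'))).1) (by
          intro X hX Y hY hXY
          have hdA₀ : ∀ B ∈ M₀, Disjoint A₀ B := by
            intro B hB
            rw [Finset.disjoint_left]
            intro x hxA hxB
            have : x ∈ A₀ ∩ W := mem_inter.mpr ⟨hxA, mem_biUnion.mpr ⟨B, hB, hxB⟩⟩
            rw [hA₀W] at this
            exact absurd this (notMem_empty x)
          rcases mem_insert.mp hX with rfl | hX' <;> rcases mem_insert.mp hY with rfl | hY'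
          · exact absurd rfl hXY
          · exact hdA₀ Y hY'
          · exact (hdA₀ X hX').symm
          · exact hMd X (hM₀M hX') Y (hM₀M hY') hXY)
        rw [card_insert_of_notMem hA₀M₀, hM₀card] at hfinal
        omega
      -- now split F at v and apply the induction hypothesis
      have hFsplit := Finset.card_filter_add_card_filter_not
        (s := F) (p := fun A => v ∈ A)
      have hdegle : (F.filter (fun A => v ∈ A)).card ≤ (n-1).choose (k-1) := by
        have h1 : F.filter (fun A => v ∈ A) = F.filter (fun A => ({v} : Finset α) ⊆ A) := by
          apply Finset.filter_congr; intro A _; simp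
        have := filt_card_le V k F hF {v}
        rw [card_singleton] at this
        have hVs : (V \ {v}).card = n - 1 := by
          rw [card_sdiff_of_subset (singleton_subset_iff.mpr hvV), card_singleton]
        rw [hVs] at this
        rw [h1]
        exact this
      have hF'le : (F.filter (fun A => v ∉ A)).card
          ≤ (n-1).choose k - (n-1-s).choose k := by
        have hV' : (V.erase v).card = n - 1 := by rw [card_erase_of_mem hvV]
        have happ := ih (V.erase v) (F.filter (fun A => v ∉ A)) (by
          rw [hV']
          have := Nbig_step k s
          omega) (by
          intro A hA
          rw [mem_filter] at hA
          exact ⟨Finset.subset_erase.mpr ⟨(hF A hA.1).1, hA.2⟩, (hF A hA.1).2⟩) hm'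
        rwa [hV'] at happ
      have hpas : n.choose k = (n-1).choose (k-1) + (n-1).choose k :=
        pascal n k (by omega) (by omega)
      have hmono : (n-(s+1)).choose k ≤ (n-1).choose k :=
        Nat.choose_le_choose k (by omega)
      have heq : n - 1 - s = n - (s+1) := by omega
      rw [heq] at hF'le
      omega
    · push_neg at hbig
      obtain ⟨W, hWcard, hWcov⟩ := exists_cover V k (s+1) F hF (by omega) hm
      have hFle : F.card ≤ ∑ w ∈ W, (F.filter (fun A => w ∈ A)).card := by
        calc F.card ≤ (W.biUnion (fun w => F.filter (fun A => w ∈ A))).card := by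
              apply Finset.card_le_card
              intro A hA
              obtain ⟨x, hx⟩ := hWcov A hA
              rw [mem_inter] at hx
              exact mem_biUnion.mpr ⟨x, hx.2, mem_filter.mpr ⟨hA, hx.1⟩⟩
        _ ≤ ∑ w ∈ W, (F.filter (fun A => w ∈ A)).card := card_biUnion_le
      have hFle2 : F.card ≤ (s+1)^2*k^2*((n-2).choose (k-2)) := by
        calc F.card ≤ ∑ w ∈ W, (F.filter (fun A => w ∈ A)).card := hFle
        _ ≤ ∑ _w ∈ W, (s+1)*k*((n-2).choose (k-2)) :=
            Finset.sum_le_sum (fun w _ => hbig w)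
        _ = W.card * ((s+1)*k*((n-2).choose (k-2))) := by
            rw [Finset.sum_const, smul_eq_mul]
        _ ≤ ((s+1)*k) * ((s+1)*k*((n-2).choose (k-2))) := Nat.mul_le_mul_right _ hWcard
        _ = (s+1)^2*k^2*((n-2).choose (k-2)) := by ring
      have hsb := spread_bound k (s+1) n hk hn
      have hpas : n.choose k = (n-1).choose (k-1) + (n-1).choose k :=
        pascal n k (by omega) (by omega)
      have hmono : (n-(s+1)).choose k ≤ (n-1).choose k :=
        Nat.choose_le_choose k (by omega)
      omega

lemma mem_B_iff (V S A : Finset α) (k : ℕ) :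
    A ∈ (V.powersetCard k).filter (fun A => (A ∩ S).Nonempty)
      ↔ A ⊆ V ∧ A.card = k ∧ (A ∩ S).Nonempty := by
  simp only [mem_filter, mem_powersetCard]; tauto

lemma deg_le_D (V : Finset α) (k : ℕ) (F : Finset (Finset α))
    (hF : ∀ A ∈ F, A ⊆ V ∧ A.card = k) (E : Finset α)
    (hE : E ∈ V.powersetCard (k-1)) (hk1 : 1 ≤ k) (hkn : k ≤ V.card) :
    (F.filter fun A => E ⊆ A).card ≤ V.card - k + 1 := by
  have h := filt_card_le V k F hF E
  rw [mem_powersetCard] at hE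
  have e1 : k - E.card = 1 := by rw [hE.2]; omega
  have hEcard : E.card ≤ k - 1 := le_of_eq hE.2
  rw [card_sdiff_of_subset hE.1, e1, Nat.choose_one_right, hE.2] at h
  omega

/-- If some vertex has large degree, deleting it drops the matching number. -/
lemma matching_drop (V : Finset α) (k s : ℕ) (F : Finset (Finset α))
    (hF : ∀ A ∈ F, A ⊆ V ∧ A.card = k)
    (hm : ∀ M ⊆ F, (∀ A ∈ M, ∀ B ∈ M, A ≠ B → Disjoint A B) → M.card ≤ s + 1)
    (v : α) (hv : (s+1)*k*((V.card-2).choose (k-2)) < (F.filter (fun A => v ∈ A)).card)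
    (hvV : v ∈ V) :
    ∀ M ⊆ F.filter (fun A => v ∉ A),
      (∀ A ∈ M, ∀ B ∈ M, A ≠ B → Disjoint A B) → M.card ≤ s := by
  set n := V.card with hndef
  intro M hM hMd
  by_contra hcon
  push_neg at hcon
  obtain ⟨M₀, hM₀M, hM₀card⟩ := Finset.exists_subset_card_eq (Nat.succ_le_of_lt hcon)
  set W := M₀.biUnion id with hWdef
  have hWcard : W.card ≤ (s+1)*k := by
    calc W.card ≤ ∑ A ∈ M₀, A.card := card_biUnion_le
    _ ≤ ∑ _A ∈ M₀, k := Finset.sum_le_sum (fun A hA =>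
        le_of_eq (hF A (Finset.mem_filter.mp (hM (hM₀M hA))).1).2)
    _ = (s+1) * k := by rw [Finset.sum_const, smul_eq_mul, hM₀card]
  have hvW : v ∉ W := by
    rw [hWdef, mem_biUnion]
    rintro ⟨B, hB, hvB⟩
    exact (Finset.mem_filter.mp (hM (hM₀M hB))).2 hvB
  have hWV : W ⊆ V := by
    intro x hx
    rw [hWdef, mem_biUnion] at hx
    obtain ⟨B, hB, hxB⟩ := hx
    exact (hF B (Finset.mem_filter.mp (hM (hM₀M hB))).1).1 hxB
  have hcount : (F.filter (fun A => v ∈ A ∧ (A ∩ W).Nonempty)).card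
      ≤ (s+1)*k*((n-2).choose (k-2)) := by
    have hsub : F.filter (fun A => v ∈ A ∧ (A ∩ W).Nonempty)
        ⊆ W.biUnion (fun u => F.filter (fun A => v ∈ A ∧ u ∈ A)) := by
      intro A hA
      rw [mem_filter] at hA
      obtain ⟨x, hx⟩ := hA.2.2
      rw [mem_inter] at hx
      rw [mem_biUnion]
      exact ⟨x, hx.2, mem_filter.mpr ⟨hA.1, hA.2.1, hx.1⟩⟩
    calc (F.filter (fun A => v ∈ A ∧ (A ∩ W).Nonempty)).card
        ≤ (W.biUnion (fun u => F.filter (fun A => v ∈ A ∧ u ∈ A))).card :=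
          Finset.card_le_card hsub
    _ ≤ ∑ u ∈ W, (F.filter (fun A => v ∈ A ∧ u ∈ A)).card := card_biUnion_le
    _ ≤ ∑ _u ∈ W, (n-2).choose (k-2) := by
        apply Finset.sum_le_sum
        intro u hu
        rw [pair_filter_eq]
        have hvu : v ≠ u := fun h => hvW (h ▸ hu)
        have := filt_card_le V k F hF {v, u}
        have hc2 : ({v, u} : Finset α).card = 2 := by
          rw [card_insert_of_notMem (by simp [hvu]), card_singleton]
        have hVs : (V \ {v, u}).card = n - 2 := by
          have hsub2 : ({v, u} : Finset α) ⊆ V := by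
            intro x hx
            rcases mem_insert.mp hx with rfl | hx
            · exact hvV
            · exact (mem_singleton.mp hx) ▸ hWV hu
          rw [card_sdiff_of_subset hsub2, hc2]
        have hkk : (n-2).choose (k-2) ≤ (n-2).choose (k-2) := le_refl _
        rw [hc2, hVs] at this
        exact this
    _ = W.card * ((n-2).choose (k-2)) := by rw [Finset.sum_const, smul_eq_mul]
    _ ≤ (s+1)*k*((n-2).choose (k-2)) := Nat.mul_le_mul_right _ hWcard
  have hsplit := Finset.card_filter_add_card_filter_not
    (s := F.filter (fun A => v ∈ A)) (p := fun A => (A ∩ W).Nonempty)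
  rw [Finset.filter_filter, Finset.filter_filter] at hsplit
  have hpos : 0 < (F.filter (fun A => v ∈ A ∧ ¬(A ∩ W).Nonempty)).card := by omega
  obtain ⟨A₀, hA₀⟩ := Finset.card_pos.mp hpos
  rw [mem_filter, not_nonempty_iff_eq_empty] at hA₀
  obtain ⟨hA₀F, hvA₀, hA₀W⟩ := hA₀
  have hA₀M₀ : A₀ ∉ M₀ := fun h => (Finset.mem_filter.mp (hM (hM₀M h))).2 hvA₀
  have hfinal := hm (insert A₀ M₀) (by
    intro X hX
    rcases mem_insert.mp hX with rfl | hX'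
    · exact hA₀F
    · exact (Finset.mem_filter.mp (hM (hM₀M hX'))).1) (by
    intro X hX Y hY hXY
    have hdA₀ : ∀ B ∈ M₀, Disjoint A₀ B := by
      intro B hB
      rw [Finset.disjoint_left]
      intro x hxA hxB
      have : x ∈ A₀ ∩ W := mem_inter.mpr ⟨hxA, mem_biUnion.mpr ⟨B, hB, hxB⟩⟩
      rw [hA₀W] at this
      exact absurd this (notMem_empty x)
    rcases mem_insert.mp hX with rfl | hX' <;> rcases mem_insert.mp hY with rfl | hY'
    · exact absurd rfl hXY
    · exact hdA₀ Y hY'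
    · exact (hdA₀ X hX').symm
    · exact hMd X (hM₀M hX') Y (hM₀M hY') hXY)
  rw [card_insert_of_notMem hA₀M₀, hM₀card] at hfinal
  omega

lemma choose_pred_eq (k : ℕ) (hk : 1 ≤ k) : k.choose (k-1) = k := by
  have h1 : k - (k-1) = 1 := by omega
  rw [← Nat.choose_symm (show k-1 ≤ k by omega), h1, Nat.choose_one_right]

/-- Main lemma: the ℓ₂-norm Erdős Matching theorem over an arbitrary ground set. -/
lemma l2main (k : ℕ) (hk : 2 ≤ k) : ∀ s : ℕ, ∀ V : Finset α, ∀ F : Finset (Finset α),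
    Nbig k s ≤ V.card → (∀ A ∈ F, A ⊆ V ∧ A.card = k) →
    (∀ M ⊆ F, (∀ A ∈ M, ∀ B ∈ M, A ≠ B → Disjoint A B) → M.card ≤ s) →
    (∑ E ∈ V.powersetCard (k-1), ((F.filter fun A => E ⊆ A).card) ^ 2
        ≤ s^2 * (V.card - s).choose (k-1)
          + (V.card - k + 1)^2 * ((V.card).choose (k-1) - (V.card - s).choose (k-1))) ∧
    ((∑ E ∈ V.powersetCard (k-1), ((F.filter fun A => E ⊆ A).card) ^ 2
        = s^2 * (V.card - s).choose (k-1)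
          + (V.card - k + 1)^2 * ((V.card).choose (k-1) - (V.card - s).choose (k-1))) ↔
      ∃ S : Finset α, S ⊆ V ∧ S.card = s ∧
        F = (V.powersetCard k).filter fun A => (A ∩ S).Nonempty) := by
  intro s
  induction s with
  | zero =>
    intro V F _ _ hm
    have hF0 : F = ∅ := by
      by_contra h
      obtain ⟨A, hA⟩ := Finset.nonempty_iff_ne_empty.mpr h
      have := hm {A} (singleton_subset_iff.mpr hA) (by
        intro X hX Y hY hXY
        rw [mem_singleton] at hX hY
        exact absurd (hX.trans hY.symm) hXY)
      simp at this
    subst hF0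
    have hz : ∑ E ∈ V.powersetCard (k-1), (((∅ : Finset (Finset α)).filter
        fun A => E ⊆ A).card) ^ 2 = 0 := by simp
    have hrhs : (0:ℕ)^2 * (V.card - 0).choose (k-1)
        + (V.card - k + 1)^2 * ((V.card).choose (k-1) - (V.card - 0).choose (k-1)) = 0 := by
      simp
    rw [hz, hrhs]
    refine ⟨le_refl 0, ?_⟩
    constructor
    · intro _
      refine ⟨∅, empty_subset V, card_empty, ?_⟩
      ext A
      simp
    · intro _; rfl
  | succ s ih =>
    intro V F hn hF hm
    set n := V.card with hndef
    have hn16 : k + (s+1) + 16 ≤ n := Nbig_ge k (s+1) n hn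
    -- value of co₂ on extremal families
    have hBco2 : ∀ S : Finset α, S ⊆ V → S.card = s + 1 →
        ∑ E ∈ V.powersetCard (k-1),
            ((((V.powersetCard k).filter (fun A => (A ∩ S).Nonempty)).filter
              fun A => E ⊆ A).card) ^ 2
          = (s+1)^2 * (n - (s+1)).choose (k-1)
            + (n - k + 1)^2 * (n.choose (k-1) - (n - (s+1)).choose (k-1)) := by
      intro S hSV hScard
      have := co2_B V S k hSV (by omega) (by omega)
      rwa [hScard, ← hndef] at this
    have hback : (∃ S : Finset α, S ⊆ V ∧ S.card = s + 1 ∧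
        F = (V.powersetCard k).filter fun A => (A ∩ S).Nonempty) →
        ∑ E ∈ V.powersetCard (k-1), ((F.filter fun A => E ⊆ A).card) ^ 2
          = (s+1)^2 * (n - (s+1)).choose (k-1)
            + (n - k + 1)^2 * (n.choose (k-1) - (n - (s+1)).choose (k-1)) := by
      rintro ⟨S, hSV, hScard, rfl⟩
      exact hBco2 S hSV hScard
    by_cases hbig : ∃ v, (s+1)*k*((n-2).choose (k-2)) < (F.filter (fun A => v ∈ A)).card
    · -- CASE A : high-degree vertex
      obtain ⟨v, hv⟩ := hbig
      have hdegpos : 0 < (F.filter (fun A => v ∈ A)).card := lt_of_le_of_lt (Nat.zero_le _) hv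
      obtain ⟨A₁, hA₁⟩ := Finset.card_pos.mp hdegpos
      rw [mem_filter] at hA₁
      have hvV : v ∈ V := (hF A₁ hA₁.1).1 hA₁.2
      have hm' := matching_drop V k s F hF hm v hv hvV
      set V' := V.erase v with hV'def
      set F' := F.filter (fun A => v ∉ A) with hF'def
      have hV' : V'.card = n - 1 := by rw [hV'def, card_erase_of_mem hvV]
      have hF' : ∀ A ∈ F', A ⊆ V' ∧ A.card = k := by
        intro A hA
        rw [hF'def, mem_filter] at hA
        exact ⟨Finset.subset_erase.mpr ⟨(hF A hA.1).1, hA.2⟩, (hF A hA.1).2⟩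
      have hnV' : Nbig k s ≤ V'.card := by
        rw [hV']; have := Nbig_step k s; omega
      obtain ⟨ihle, ihiff0⟩ := ih V' F' hnV' hF' hm'
      rw [hV'] at ihle ihiff0
      have ihiff := PLift.up ihiff0
      clear ihiff0
      have hsize : F'.card ≤ (n-1).choose k - (n-1-s).choose k := by
        have := emc_size k hk s V' F' hnV' hF' hm'
        rwa [hV'] at this
      -- a model extremal family G
      obtain ⟨T, hTV', hTcard⟩ : ∃ T ⊆ V', T.card = s := by
        apply Finset.exists_subset_card_eq
        rw [hV']; omega
      have hvT : v ∉ T := fun h => (Finset.notMem_erase v V) (hTV' h)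
      set S₀ := insert v T with hS₀def
      have hS₀V : S₀ ⊆ V := insert_subset hvV (hTV'.trans (erase_subset v V))
      have hS₀card : S₀.card = s + 1 := by rw [hS₀def, card_insert_of_notMem hvT, hTcard]
      set G := (V.powersetCard k).filter (fun A => (A ∩ S₀).Nonempty) with hGdef
      have hG : ∀ A ∈ G, A ⊆ V ∧ A.card = k := by
        intro A hA
        rw [hGdef, mem_B_iff] at hA
        exact ⟨hA.1, hA.2.1⟩
      have hG' : G.filter (fun A => v ∉ A)
          = (V'.powersetCard k).filter (fun A => (A ∩ T).Nonempty) := by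
        ext A
        rw [mem_filter, hGdef, mem_B_iff, mem_B_iff]
        constructor
        · rintro ⟨⟨hAV, hAk, x, hx⟩, hvA⟩
          rw [mem_inter] at hx
          have hxv : x ≠ v := fun h => hvA (h ▸ hx.1)
          have hxT : x ∈ T := by
            rcases mem_insert.mp hx.2 with h | h
            · exact absurd h hxv
            · exact h
          exact ⟨Finset.subset_erase.mpr ⟨hAV, hvA⟩, hAk, x, mem_inter.mpr ⟨hx.1, hxT⟩⟩
        · rintro ⟨hAV', hAk, x, hx⟩
          rw [mem_inter] at hx
          have hvA : v ∉ A := fun h => (Finset.notMem_erase v V) (hAV' h)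
          exact ⟨⟨hAV'.trans (erase_subset v V), hAk,
            x, mem_inter.mpr ⟨hx.1, mem_insert_of_mem hx.2⟩⟩, hvA⟩
      -- decompositions
      have dF := co2_decomp V k hk v F (fun A hA => (hF A hA).2)
      have dG := co2_decomp V k hk v G (fun A hA => (hG A hA).2)
      rw [← hF'def] at dF
      rw [hG'] at dG
      rw [← hV'def] at dF dG
      -- piece 1
      have h1 : ∑ E ∈ (V.powersetCard (k-1)).filter (fun E => v ∈ E),
          ((F.filter fun A => E ⊆ A).card) ^ 2
          ≤ ((V.powersetCard (k-1)).filter (fun E => v ∈ E)).card * (n-k+1)^2 := by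
        rw [← smul_eq_mul, ← Finset.sum_const]
        apply Finset.sum_le_sum
        intro E hE
        exact Nat.pow_le_pow_left (deg_le_D V k F hF E (Finset.mem_of_mem_filter E hE)
          (by omega) (by omega)) 2
      have hb1 : ∑ E ∈ (V.powersetCard (k-1)).filter (fun E => v ∈ E),
          ((G.filter fun A => E ⊆ A).card) ^ 2
          = ((V.powersetCard (k-1)).filter (fun E => v ∈ E)).card * (n-k+1)^2 := by
        rw [← smul_eq_mul, ← Finset.sum_const]
        apply Finset.sum_congr rfl
        intro E hE
        rw [mem_filter, mem_powersetCard] at hE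
        rw [hGdef, deg_B_meet V S₀ E k hS₀V (by omega) (by omega) hE.1.1 hE.1.2
          ⟨v, mem_inter.mpr ⟨hE.2, mem_insert_self v T⟩⟩]
      -- piece 2
      have hb2 : ∑ E ∈ V'.powersetCard (k-1),
          ((((V'.powersetCard k).filter (fun A => (A ∩ T).Nonempty)).filter
            fun A => E ⊆ A).card) ^ 2
          = s^2 * (n-1-s).choose (k-1)
            + (n-1-k+1)^2 * ((n-1).choose (k-1) - (n-1-s).choose (k-1)) := by
        have := co2_B V' T k hTV' (by omega) (by rw [hV']; omega)
        rwa [hTcard, hV'] at this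
      -- piece 3 : cross terms
      have hcrossF : ∑ E ∈ V'.powersetCard (k-1),
          ((F'.filter fun A => E ⊆ A).card) * (if insert v E ∈ F then 1 else 0)
          ≤ k * ((n-1).choose k - (n-1-s).choose k) := by
        calc ∑ E ∈ V'.powersetCard (k-1),
            ((F'.filter fun A => E ⊆ A).card) * (if insert v E ∈ F then 1 else 0)
            ≤ ∑ E ∈ V'.powersetCard (k-1), ((F'.filter fun A => E ⊆ A).card) := by
              apply Finset.sum_le_sum
              intro E _
              split <;> simp
        _ = k.choose (k-1) * F'.card := degsum V' k (k-1) F' hF'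
        _ = k * F'.card := by rw [choose_pred_eq k (by omega)]
        _ ≤ k * ((n-1).choose k - (n-1-s).choose k) := Nat.mul_le_mul_left k hsize
      have hins : ∀ E ∈ V'.powersetCard (k-1), insert v E ∈ G := by
        intro E hE
        rw [mem_powersetCard] at hE
        have hvE : v ∉ E := fun h => (Finset.notMem_erase v V) (hE.1 h)
        rw [hGdef, mem_B_iff]
        exact ⟨insert_subset hvV (hE.1.trans (erase_subset v V)),
          by rw [card_insert_of_notMem hvE, hE.2]; omega,
          v, mem_inter.mpr ⟨mem_insert_self v E, mem_insert_self v T⟩⟩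
      have hcrossG : ∑ E ∈ V'.powersetCard (k-1),
          ((((V'.powersetCard k).filter (fun A => (A ∩ T).Nonempty)).filter
              fun A => E ⊆ A).card)
            * (if insert v E ∈ G then 1 else 0)
          = k * ((n-1).choose k - (n-1-s).choose k) := by
        have : ∀ E ∈ V'.powersetCard (k-1),
            ((((V'.powersetCard k).filter (fun A => (A ∩ T).Nonempty)).filter
                fun A => E ⊆ A).card)
              * (if insert v E ∈ G then 1 else 0)
            = (((V'.powersetCard k).filter (fun A => (A ∩ T).Nonempty)).filter
                fun A => E ⊆ A).card := by
          intro E hE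
          rw [if_pos (hins E hE), mul_one]
        rw [Finset.sum_congr rfl this]
        have hGsz := degsum V' k (k-1) ((V'.powersetCard k).filter (fun A => (A ∩ T).Nonempty))
          (by intro A hA; rw [mem_B_iff] at hA; exact ⟨hA.1, hA.2.1⟩)
        rw [hGsz, B_card V' T k hTV', hTcard, hV', choose_pred_eq k (by omega)]
      -- piece 4
      have h4 : ((V'.powersetCard (k-1)).filter (fun E => insert v E ∈ F)).card
          ≤ (n-1).choose (k-1) := by
        calc ((V'.powersetCard (k-1)).filter (fun E => insert v E ∈ F)).card
            ≤ (V'.powersetCard (k-1)).card := Finset.card_filter_le _ _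
        _ = (n-1).choose (k-1) := by rw [card_powersetCard, hV']
      have hb4 : ((V'.powersetCard (k-1)).filter (fun E => insert v E ∈ G)).card
          = (n-1).choose (k-1) := by
        rw [Finset.filter_true_of_mem hins, card_powersetCard, hV']
      -- combine
      have hGco2 := hBco2 S₀ hS₀V hS₀card
      rw [← hGdef] at hGco2
      have hb2' : ∑ E ∈ V'.powersetCard (k-1),
          ((F'.filter fun A => E ⊆ A).card) ^ 2
          ≤ s^2 * (n-1-s).choose (k-1)
            + (n-1-k+1)^2 * ((n-1).choose (k-1) - (n-1-s).choose (k-1)) := ihle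
      have hmain : ∑ E ∈ V.powersetCard (k-1), ((F.filter fun A => E ⊆ A).card) ^ 2
          ≤ (s+1)^2 * (n - (s+1)).choose (k-1)
            + (n - k + 1)^2 * (n.choose (k-1) - (n - (s+1)).choose (k-1)) := by
        rw [← hGco2, dF, dG, hb1, hb2, hcrossG, hb4]
        omega
      refine ⟨hmain, ?_, hback⟩
      -- forward direction of the equality characterization
      intro hEq
      rw [← hGco2, dG, hb1, hb2, hcrossG, hb4] at hEq
      rw [dF] at hEq
      have htight1 : ∑ E ∈ (V.powersetCard (k-1)).filter (fun E => v ∈ E),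
          ((F.filter fun A => E ⊆ A).card) ^ 2
          = ((V.powersetCard (k-1)).filter (fun E => v ∈ E)).card * (n-k+1)^2 := by
        omega
      have htight2 : ∑ E ∈ V'.powersetCard (k-1),
          ((F'.filter fun A => E ⊆ A).card) ^ 2
          = s^2 * (n-1-s).choose (k-1)
            + (n-1-k+1)^2 * ((n-1).choose (k-1) - (n-1-s).choose (k-1)) := by
        omega
      -- all degrees through v are full
      have hall : ∀ E ∈ (V.powersetCard (k-1)).filter (fun E => v ∈ E),
          (F.filter fun A => E ⊆ A).card = n - k + 1 := by
        by_contra hcon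
        push_neg at hcon
        obtain ⟨E₀, hE₀, hE₀ne⟩ := hcon
        have hlt : ∑ E ∈ (V.powersetCard (k-1)).filter (fun E => v ∈ E),
            ((F.filter fun A => E ⊆ A).card) ^ 2
            < ∑ _E ∈ (V.powersetCard (k-1)).filter (fun E => v ∈ E), (n-k+1)^2 := by
          apply Finset.sum_lt_sum
          · intro E hE
            exact Nat.pow_le_pow_left (deg_le_D V k F hF E (Finset.mem_of_mem_filter E hE)
              (by omega) (by omega)) 2
          · refine ⟨E₀, hE₀, ?_⟩
            have hle := deg_le_D V k F hF E₀ (Finset.mem_of_mem_filter E₀ hE₀)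
              (by omega) (by omega)
            exact Nat.pow_lt_pow_left (lt_of_le_of_ne hle hE₀ne) (by norm_num)
        rw [Finset.sum_const, smul_eq_mul] at hlt
        omega
      -- every k-set containing v belongs to F
      have hallv : ∀ A : Finset α, A ⊆ V → A.card = k → v ∈ A → A ∈ F := by
        intro A hAV hAk hvA
        obtain ⟨x, hx⟩ : (A.erase v).Nonempty := by
          rw [← card_pos, card_erase_of_mem hvA, hAk]; omega
        have hxA : x ∈ A := mem_of_mem_erase hx
        have hxv : x ≠ v := ne_of_mem_erase hx
        set E := A.erase x with hEdef
        have hvE : v ∈ E := mem_erase.mpr ⟨fun h => hxv h.symm, hvA⟩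
        have hEV : E ⊆ V := (erase_subset x A).trans hAV
        have hEcard : E.card = k - 1 := by rw [hEdef, card_erase_of_mem hxA, hAk]
        have hEmem : E ∈ (V.powersetCard (k-1)).filter (fun E => v ∈ E) :=
          mem_filter.mpr ⟨mem_powersetCard.mpr ⟨hEV, hEcard⟩, hvE⟩
        have hdeg := hall E hEmem
        -- the map A' ↦ A' \ E from the star at E is a bijection onto singletons of V \ E
        have himg : (F.filter fun A' => E ⊆ A').image (fun A' => A' \ E)
            = (V \ E).powersetCard 1 := by
          apply Finset.eq_of_subset_of_card_le
          · intro B hB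
            rw [mem_image] at hB
            obtain ⟨A', hA', rfl⟩ := hB
            rw [mem_filter] at hA'
            rw [mem_powersetCard]
            exact ⟨sdiff_subset_sdiff (hF A' hA'.1).1 (Finset.Subset.refl E),
              by rw [card_sdiff_of_subset hA'.2, (hF A' hA'.1).2, hEcard]; omega⟩
          · rw [card_powersetCard, Nat.choose_one_right, card_sdiff_of_subset hEV, hEcard,
              Finset.card_image_of_injOn, hdeg]
            · omega
            · intro X hX Y hY hXY
              simp only [coe_filter, Set.mem_setOf_eq] at hX hY
              simp only at hXY
              have : E ∪ (X \ E) = E ∪ (Y \ E) := by rw [hXY]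
              rwa [union_sdiff_of_subset hX.2, union_sdiff_of_subset hY.2] at this
        have hxmem : ({x} : Finset α) ∈ (V \ E).powersetCard 1 := by
          rw [mem_powersetCard]
          refine ⟨singleton_subset_iff.mpr (mem_sdiff.mpr ⟨hAV hxA, ?_⟩), card_singleton x⟩
          rw [hEdef]
          exact Finset.notMem_erase x A
        rw [← himg, mem_image] at hxmem
        obtain ⟨A', hA', hA'x⟩ := hxmem
        rw [mem_filter] at hA'
        have : A' = A := by
          have h1 : A' = E ∪ (A' \ E) := (union_sdiff_of_subset hA'.2).symm
          have h2 : A = E ∪ {x} := by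
            rw [hEdef, union_comm, ← insert_eq, insert_erase hxA]
          rw [h1, hA'x, ← h2]
        rw [← this]
        exact hA'.1
      -- structure of F'
      obtain ⟨T', hT'V', hT'card, hF'B⟩ := ihiff.down.mp htight2
      set S := insert v T' with hSdef
      have hvT' : v ∉ T' := fun h => (Finset.notMem_erase v V) (hT'V' h)
      have hSV : S ⊆ V := insert_subset hvV (hT'V'.trans (erase_subset v V))
      have hScard : S.card = s + 1 := by rw [hSdef, card_insert_of_notMem hvT', hT'card]
      refine ⟨S, hSV, hScard, ?_⟩
      ext A
      rw [mem_B_iff]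
      constructor
      · intro hA
        refine ⟨(hF A hA).1, (hF A hA).2, ?_⟩
        by_cases hvA : v ∈ A
        · exact ⟨v, mem_inter.mpr ⟨hvA, mem_insert_self v T'⟩⟩
        · have hAF' : A ∈ F' := mem_filter.mpr ⟨hA, hvA⟩
          rw [hF'B, mem_B_iff] at hAF'
          obtain ⟨x, hx⟩ := hAF'.2.2
          rw [mem_inter] at hx
          exact ⟨x, mem_inter.mpr ⟨hx.1, mem_insert_of_mem hx.2⟩⟩
      · rintro ⟨hAV, hAk, x, hx⟩
        by_cases hvA : v ∈ A
        · exact hallv A hAV hAk hvA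
        · rw [mem_inter] at hx
          have hxv : x ≠ v := fun h => hvA (h ▸ hx.1)
          have hxT' : x ∈ T' := by
            rcases mem_insert.mp hx.2 with h | h
            · exact absurd h hxv
            · exact h
          have : A ∈ F' := by
            rw [hF'B, mem_B_iff]
            exact ⟨Finset.subset_erase.mpr ⟨hAV, hvA⟩, hAk, x, mem_inter.mpr ⟨hx.1, hxT'⟩⟩
          exact Finset.mem_of_mem_filter A this
    · -- CASE B : all degrees small, strict inequality
      push_neg at hbig
      obtain ⟨W, hWcard, hWcov⟩ := exists_cover V k (s+1) F hF (by omega) hm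
      have hFle2 : F.card ≤ (s+1)^2*k^2*((n-2).choose (k-2)) := by
        calc F.card ≤ (W.biUnion (fun w => F.filter (fun A => w ∈ A))).card := by
              apply Finset.card_le_card
              intro A hA
              obtain ⟨x, hx⟩ := hWcov A hA
              rw [mem_inter] at hx
              exact mem_biUnion.mpr ⟨x, hx.2, mem_filter.mpr ⟨hA, hx.1⟩⟩
        _ ≤ ∑ w ∈ W, (F.filter (fun A => w ∈ A)).card := card_biUnion_le
        _ ≤ ∑ _w ∈ W, (s+1)*k*((n-2).choose (k-2)) :=
            Finset.sum_le_sum (fun w _ => hbig w)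
        _ = W.card * ((s+1)*k*((n-2).choose (k-2))) := by
            rw [Finset.sum_const, smul_eq_mul]
        _ ≤ ((s+1)*k) * ((s+1)*k*((n-2).choose (k-2))) := Nat.mul_le_mul_right _ hWcard
        _ = (s+1)^2*k^2*((n-2).choose (k-2)) := by ring
      have hstrict : ∑ E ∈ V.powersetCard (k-1), ((F.filter fun A => E ⊆ A).card) ^ 2
          < (s+1)^2 * (n - (s+1)).choose (k-1)
            + (n - k + 1)^2 * (n.choose (k-1) - (n - (s+1)).choose (k-1)) := by
        have hup : ∑ E ∈ V.powersetCard (k-1), ((F.filter fun A => E ⊆ A).card) ^ 2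
            ≤ (n-k+1) * (k * F.card) := by
          calc ∑ E ∈ V.powersetCard (k-1), ((F.filter fun A => E ⊆ A).card) ^ 2
              ≤ ∑ E ∈ V.powersetCard (k-1), (n-k+1) * ((F.filter fun A => E ⊆ A).card) := by
                apply Finset.sum_le_sum
                intro E hE
                rw [pow_two]
                exact Nat.mul_le_mul_right _ (deg_le_D V k F hF E hE (by omega) (by omega))
          _ = (n-k+1) * ∑ E ∈ V.powersetCard (k-1), ((F.filter fun A => E ⊆ A).card) := by
              rw [Finset.mul_sum]
          _ = (n-k+1) * (k.choose (k-1) * F.card) := by rw [degsum V k (k-1) F hF]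
          _ = (n-k+1) * (k * F.card) := by rw [choose_pred_eq k (by omega)]
        have harith := (Nbig_arith k (s+1) n hn).2
        have hC1 : 1 ≤ (n-2).choose (k-2) := Nat.choose_pos (by omega)
        have hCmono : (n-2).choose (k-2) ≤ (n-1).choose (k-2) :=
          Nat.choose_le_choose _ (by omega)
        have hCm : (n-1).choose (k-2) ≤ n.choose (k-1) - (n-(s+1)).choose (k-1) := by
          have hp : n.choose (k-1) = (n-1).choose (k-2) + (n-1).choose (k-1) := by
            have := pascal n (k-1) (by omega) (by omega)
            have he : k - 1 - 1 = k - 2 := by omega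
            rwa [he] at this
          have hmono2 : (n-(s+1)).choose (k-1) ≤ (n-1).choose (k-1) :=
            Nat.choose_le_choose _ (by omega)
          omega
        have hchain : (n-k+1) * (k * F.card)
            < (n-k+1)^2 * (n.choose (k-1) - (n-(s+1)).choose (k-1)) := by
          calc (n-k+1) * (k * F.card)
              ≤ (n-k+1) * (k * ((s+1)^2*k^2*((n-2).choose (k-2)))) := by
                apply Nat.mul_le_mul_left
                exact Nat.mul_le_mul_left _ hFle2
          _ = (n-k+1) * ((s+1)^2*k^3*((n-2).choose (k-2))) := by ring
          _ < (n-k+1) * ((n-k+1) * ((n-2).choose (k-2))) := by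
                have hpos1 : 0 < n-k+1 := by omega
                refine (Nat.mul_lt_mul_left hpos1).mpr ?_
                refine (Nat.mul_lt_mul_right hC1).mpr ?_
                omega
          _ ≤ (n-k+1) * ((n-k+1) * (n.choose (k-1) - (n-(s+1)).choose (k-1))) := by
                apply Nat.mul_le_mul_left
                apply Nat.mul_le_mul_left
                omega
          _ = (n-k+1)^2 * (n.choose (k-1) - (n-(s+1)).choose (k-1)) := by ring
        omega
      refine ⟨le_of_lt hstrict, ?_, fun h => absurd (hback h) (ne_of_lt hstrict)⟩
      intro h
      exact absurd h (ne_of_lt hstrict)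

/-- Erdős Matching Conjecture in the ℓ₂-norm: for fixed `k, s ≥ 1` and `n` large enough,
every family `F` of `k`-subsets of `[n]` with matching number at most `s` satisfies
`co₂(F) ≤ co₂(B(n,k,s)) = s²·C(n-s,k-1) + (n-k+1)²·(C(n,k-1) − C(n-s,k-1))`,
with equality iff `F` is isomorphic to `B(n,k,s)`, i.e. `F` consists of all `k`-sets
meeting a fixed `s`-set. -/
theorem emc_l2 (k s : ℕ) (hk : 1 ≤ k) (hs : 1 ≤ s) :
    ∃ n₀ : ℕ, ∀ n : ℕ, n₀ ≤ n → ∀ F : Finset (Finset (Fin n)),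
      (∀ A ∈ F, A.card = k) →
      (∀ M ⊆ F, (∀ A ∈ M, ∀ B ∈ M, A ≠ B → Disjoint A B) → M.card ≤ s) →
      ((∑ E ∈ Finset.univ.powersetCard (k - 1), ((F.filter fun A => E ⊆ A).card) ^ 2 ≤
          s ^ 2 * (n - s).choose (k - 1)
            + (n - k + 1) ^ 2 * (n.choose (k - 1) - (n - s).choose (k - 1))) ∧
        ((∑ E ∈ Finset.univ.powersetCard (k - 1), ((F.filter fun A => E ⊆ A).card) ^ 2 =
            s ^ 2 * (n - s).choose (k - 1)
              + (n - k + 1) ^ 2 * (n.choose (k - 1) - (n - s).choose (k - 1))) ↔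
          ∃ S : Finset (Fin n), S.card = s ∧
            F = (Finset.univ.powersetCard k).filter fun A => (A ∩ S).Nonempty)) := by
  rcases Nat.lt_or_ge k 2 with hk2 | hk2
  · -- the easy case k = 1
    have hk1 : k = 1 := by omega
    subst hk1
    refine ⟨0, fun n _ F hcard hmatch => ?_⟩
    have hdisj : ∀ A ∈ F, ∀ B ∈ F, A ≠ B → Disjoint A B := by
      intro A hA B hB hAB
      obtain ⟨a, rfl⟩ := Finset.card_eq_one.mp (hcard A hA)
      obtain ⟨b, rfl⟩ := Finset.card_eq_one.mp (hcard B hB)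
      rw [Finset.disjoint_singleton]
      intro h
      exact hAB (by rw [h])
    have hFs : F.card ≤ s := hmatch F (Finset.Subset.refl F) hdisj
    have hlhs : ∑ E ∈ Finset.univ.powersetCard (1 - 1),
        ((F.filter fun A => E ⊆ A).card) ^ 2 = F.card ^ 2 := by
      have h0 : (1:ℕ) - 1 = 0 := rfl
      rw [h0, Finset.powersetCard_zero, Finset.sum_singleton,
        Finset.filter_true_of_mem (fun A _ => Finset.empty_subset A)]
    have hrhs : s ^ 2 * (n - s).choose (1 - 1)
        + (n - 1 + 1) ^ 2 * (n.choose (1 - 1) - (n - s).choose (1 - 1)) = s ^ 2 := by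
      simp
    rw [hlhs, hrhs]
    refine ⟨Nat.pow_le_pow_left hFs 2, ?_, ?_⟩
    · intro hEq
      have hFcard : F.card = s := by
        by_contra hne
        exact absurd hEq (ne_of_lt (Nat.pow_lt_pow_left (lt_of_le_of_ne hFs hne) (by norm_num)))
      refine ⟨F.biUnion (fun A => A), ?_, ?_⟩
      · rw [Finset.card_biUnion hdisj, ← hFcard]
        have : ∀ A ∈ F, A.card = 1 := fun A hA => hcard A hA
        rw [Finset.sum_congr rfl this, Finset.sum_const, smul_eq_mul, mul_one]
      · ext A
        simp only [Finset.mem_filter, Finset.mem_powersetCard]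
        constructor
        · intro hA
          obtain ⟨a, ha⟩ := Finset.card_eq_one.mp (hcard A hA)
          refine ⟨⟨Finset.subset_univ A, hcard A hA⟩, a, ?_⟩
          rw [Finset.mem_inter, Finset.mem_biUnion]
          exact ⟨ha ▸ Finset.mem_singleton_self a, A, hA, ha ▸ Finset.mem_singleton_self a⟩
        · rintro ⟨⟨_, hA1⟩, x, hx⟩
          rw [Finset.mem_inter, Finset.mem_biUnion] at hx
          obtain ⟨hxA, B, hBF, hxB⟩ := hx
          obtain ⟨a, rfl⟩ := Finset.card_eq_one.mp hA1
          obtain ⟨b, rfl⟩ := Finset.card_eq_one.mp (hcard B hBF)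
          simp only [Finset.mem_singleton] at hxA hxB
          have hab : a = b := hxA.symm.trans hxB
          subst hab
          exact hBF
    · rintro ⟨S, hScard, rfl⟩
      have himg : (Finset.univ.powersetCard 1).filter
          (fun A => (A ∩ S).Nonempty) = S.image (fun x => {x}) := by
        ext A
        simp only [Finset.mem_filter, Finset.mem_powersetCard, Finset.mem_image]
        constructor
        · rintro ⟨⟨_, hA1⟩, x, hx⟩
          obtain ⟨a, rfl⟩ := Finset.card_eq_one.mp hA1
          rw [Finset.mem_inter, Finset.mem_singleton] at hx
          exact ⟨x, hx.1 ▸ hx.2, by rw [hx.1]⟩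
        · rintro ⟨x, hxS, rfl⟩
          exact ⟨⟨Finset.subset_univ _, Finset.card_singleton x⟩,
            x, Finset.mem_inter.mpr ⟨Finset.mem_singleton_self x, hxS⟩⟩
      rw [himg, Finset.card_image_of_injOn (fun x _ y _ h => by
        rwa [Finset.singleton_inj] at h), hScard]
  · -- the main case k ≥ 2
    refine ⟨Nbig k s, fun n hn F hcard hmatch => ?_⟩
    have hcu : (Finset.univ : Finset (Fin n)).card = n := by
      rw [Finset.card_univ, Fintype.card_fin]
    have hmm := l2main k hk2 s (Finset.univ : Finset (Fin n)) F
      (by rw [hcu]; exact hn)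
      (fun A hA => ⟨Finset.subset_univ A, hcard A hA⟩) hmatch
    rw [hcu] at hmm
    refine ⟨hmm.1, ?_, ?_⟩
    · intro h
      obtain ⟨S, _, hScard, hFeq⟩ := hmm.2.mp h
      exact ⟨S, hScard, hFeq⟩
    · rintro ⟨S, hScard, hFeq⟩
      exact hmm.2.mpr ⟨S, Finset.subset_univ S, hScard, hFeq⟩
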